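/- Let μ be a W-valued measure on ℤ_p supported on ℤ_p^× and let φ: ℤ_p^× → W be a locally constant function. Then for every integer m (positive or negative), ∫_{ℤ_p^×} φ(x) x^m dμ = (θ^m([φ]Φ_μ))|_{t=1}, where θ = t d/dt and [φ]Φ_μ denotes the Amice transform of the twisted measure φ·μ; for negative m, θ^m is defined as the limit lim_i θ^{m+(p-1)p^i}. -/

import Mathlib

/-!
STATEMENT 6: Let μ be a W-valued measure on ℤ_p supported on ℤ_p^× and φ a locally
constant function (factoring through ℤ/p^nℤ). Then for every integer m,
  ∫_{ℤ_p^×} φ(x) x^m dμ = (θ^m([φ]Φ_μ))|_{t=1},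
where [φ]Φ_μ is the Amice transform of the twisted measure φ·μ, θ = t·d/dt, evaluation
at t = 1 is the constant coefficient in T = t-1, and for negative m the operator θ^m
is defined as the limit lim_i θ^{m+(p-1)p^i}. For x ∈ ℤ_p^× and m < 0, x^m means
Ring.inverse x ^ (-m).
-/

open PadicInt PowerSeries Filter

/-- Binomial coefficient function as a continuous map with values in `W`. -/
noncomputable def binomMap (p : ℕ) [Fact p.Prime] (W : Type*) [NormedCommRing W]
    [Algebra ℤ_[p] W] (hca : Continuous (algebraMap ℤ_[p] W)) (n : ℕ) : C(ℤ_[p], W) :=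
  (⟨algebraMap ℤ_[p] W, hca⟩ : C(ℤ_[p], W)).comp
    ⟨fun x => Ring.choose x n, PadicInt.continuous_choose n⟩

/-- The operator `θ = t·d/dt` on `W[[T]]` with `t = 1 + T`. -/
noncomputable def theta (W : Type*) [CommRing W] (F : PowerSeries W) : PowerSeries W :=
  (1 + PowerSeries.X) * F.derivativeFun

/-- Integer powers `x^m` of a p-adic integer, using `Ring.inverse` for negative `m`
(this is the genuine inverse power when `x` is a unit). -/
noncomputable def padicZPow (p : ℕ) [Fact p.Prime] (x : ℤ_[p]) (m : ℤ) : ℤ_[p] :=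
  if 0 ≤ m then x ^ m.toNat else Ring.inverse x ^ (-m).toNat

/- ### Auxiliary lemmas -/

lemma aux_choose_id (p : ℕ) [Fact p.Prime] (x : ℤ_[p]) (j : ℕ) :
    ((j:ℤ_[p]) + 1) * Ring.choose x (j+1) = (x - j) * Ring.choose x j := by
  have hf : ((j.factorial : ℤ_[p])) ≠ 0 := Nat.cast_ne_zero.mpr j.factorial_ne_zero
  apply mul_left_cancel₀ hf
  have h1 := Ring.descPochhammer_eq_factorial_smul_choose (R := ℤ_[p]) x (j+1)
  have h2 := Ring.descPochhammer_eq_factorial_smul_choose (R := ℤ_[p]) x j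
  have h3 : (descPochhammer ℤ (j+1)).smeval x = (descPochhammer ℤ j).smeval x * (x - j) := by
    rw [descPochhammer_succ_right, Polynomial.smeval_mul]
    congr 1
    simp [Polynomial.smeval_sub, Polynomial.smeval_X, Polynomial.smeval_natCast]
  rw [nsmul_eq_mul] at h1 h2
  calc (j.factorial : ℤ_[p]) * (((j:ℤ_[p])+1) * Ring.choose x (j+1))
      = ((j+1).factorial : ℤ_[p]) * Ring.choose x (j+1) := by
        rw [Nat.factorial_succ]; push_cast; ring
    _ = (descPochhammer ℤ (j+1)).smeval x := h1.symm
    _ = (descPochhammer ℤ j).smeval x * (x - j) := h3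
    _ = (j.factorial : ℤ_[p]) * ((x - j) * Ring.choose x j) := by rw [h2]; ring

lemma coeff_theta {W : Type*} [CommRing W] (F : PowerSeries W) (j : ℕ) :
    coeff j (theta W F) = coeff (j+1) F * ((j:W)+1) + coeff j F * (j:W) := by
  unfold theta
  rw [show F.derivativeFun = PowerSeries.derivative W F from rfl]
  rw [add_mul, one_mul, map_add, coeff_derivativeFun]
  cases j with
  | zero => simp [coeff_zero_X_mul]
  | succ k => rw [coeff_succ_X_mul, coeff_derivativeFun]; push_cast; ring

lemma aux_amice_iter (p : ℕ) [Fact p.Prime] (W : Type*) [NormedCommRing W]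
    [Algebra ℤ_[p] W] (hca : Continuous (algebraMap ℤ_[p] W))
    (ν : C(ℤ_[p], W) →L[W] W) (G : PowerSeries W)
    (hG : ∀ k : ℕ, PowerSeries.coeff k G = ν (binomMap p W hca k)) (k : ℕ) : ∀ j : ℕ,
    PowerSeries.coeff j ((theta W)^[k] G) =
      ν ((⟨algebraMap ℤ_[p] W, hca⟩ : C(ℤ_[p], W)) ^ k * binomMap p W hca j) := by
  induction k with
  | zero => intro j; simpa using hG j
  | succ k ih =>
    intro j
    rw [Function.iterate_succ_apply', coeff_theta, ih (j+1), ih j]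
    have hlin : (ν ((⟨algebraMap ℤ_[p] W, hca⟩ : C(ℤ_[p], W)) ^ k * binomMap p W hca (j+1))) * ((j:W)+1)
        + (ν ((⟨algebraMap ℤ_[p] W, hca⟩ : C(ℤ_[p], W)) ^ k * binomMap p W hca j)) * (j:W)
        = ν (((j:W)+1) • ((⟨algebraMap ℤ_[p] W, hca⟩ : C(ℤ_[p], W)) ^ k * binomMap p W hca (j+1))
            + (j:W) • ((⟨algebraMap ℤ_[p] W, hca⟩ : C(ℤ_[p], W)) ^ k * binomMap p W hca j)) := by
      rw [map_add, map_smul, map_smul, smul_eq_mul, smul_eq_mul]; ring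
    rw [hlin]
    congr 1
    ext x
    simp only [ContinuousMap.add_apply, ContinuousMap.smul_apply, ContinuousMap.mul_apply,
      ContinuousMap.pow_apply, ContinuousMap.coe_mk, binomMap, ContinuousMap.comp_apply,
      smul_eq_mul]
    have base : x ^ k * (((j:ℤ_[p])+1) * Ring.choose x (j+1)) + x ^ k * ((j:ℤ_[p]) * Ring.choose x j)
        = x ^ (k+1) * Ring.choose x j := by
      rw [aux_choose_id]; ring
    have h2 := congrArg (algebraMap ℤ_[p] W) base
    simp only [map_add, map_mul, map_pow, map_natCast, map_one] at h2
    linear_combination h2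

lemma aux_continuous_toZModPow (p : ℕ) [Fact p.Prime] (n : ℕ) :
    Continuous (toZModPow (p := p) n) := by
  have : IsLocallyConstant (toZModPow (p := p) n) := by
    rw [IsLocallyConstant.iff_exists_open]
    intro x
    refine ⟨Metric.ball x ((p:ℝ) ^ (-(n:ℤ))), Metric.isOpen_ball, ?_, ?_⟩
    · exact Metric.mem_ball_self (by
        have hp : p.Prime := Fact.out
        exact zpow_pos (by exact_mod_cast hp.pos) _)
    · intro y hy
      have : y - x ∈ RingHom.ker (toZModPow (p := p) n) := by
        rw [ker_toZModPow, ← PadicInt.norm_le_pow_iff_mem_span_pow]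
        rw [Metric.mem_ball, dist_eq_norm] at hy
        exact le_of_lt hy
      rw [RingHom.mem_ker, map_sub, sub_eq_zero] at this
      exact this
  exact this.continuous

lemma aux_continuous_toZMod (p : ℕ) [Fact p.Prime] :
    Continuous (toZMod (p := p)) := by
  have : IsLocallyConstant (toZMod (p := p)) := by
    rw [IsLocallyConstant.iff_exists_open]
    intro x
    refine ⟨Metric.ball x 1, Metric.isOpen_ball, by simp [Metric.mem_ball], ?_⟩
    intro y hy
    have : y - x ∈ RingHom.ker (toZMod (p := p)) := by
      rw [ker_toZMod, IsLocalRing.mem_maximalIdeal, mem_nonunits]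
      rwa [Metric.mem_ball, dist_eq_norm] at hy
    rw [RingHom.mem_ker, map_sub, sub_eq_zero] at this
    exact this
  exact this.continuous

lemma aux_isUnit_of_toZMod_ne_zero (p : ℕ) [Fact p.Prime] (x : ℤ_[p])
    (hx : toZMod x ≠ 0) : IsUnit x := by
  by_contra h
  exact hx (by rwa [← RingHom.mem_ker, ker_toZMod, IsLocalRing.mem_maximalIdeal])

lemma aux_fermat (p : ℕ) [Fact p.Prime] (x : ℤ_[p]) (hx : IsUnit x) (i : ℕ) :
    ∃ u : ℤ_[p], x ^ ((p-1) * p^i) - 1 = (p:ℤ_[p])^(i+1) * u := by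
  set e := (p-1) * p^i with he
  have hmem : x ^ e - 1 ∈ RingHom.ker (toZModPow (p := p) (i+1)) := by
    rw [RingHom.mem_ker, map_sub, map_pow, map_one, sub_eq_zero]
    obtain ⟨v, hv⟩ := hx.map (toZModPow (p := p) (i+1))
    have htot : Nat.totient (p ^ (i+1)) = p ^ i * (p - 1) :=
      Nat.totient_prime_pow Fact.out (Nat.succ_pos i)
    have hv1 : v ^ e = 1 := by
      rw [he, mul_comm, ← htot]; exact ZMod.pow_totient v
    rw [← hv, ← Units.val_pow_eq_pow_val, hv1, Units.val_one]
  rw [ker_toZModPow, Ideal.mem_span_singleton] at hmem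
  obtain ⟨u, hu⟩ := hmem
  exact ⟨u, hu⟩


theorem statement6 (p : ℕ) [Fact p.Prime] (W : Type*) [NormedCommRing W] [CompleteSpace W]
    [IsUltrametricDist W] [Algebra ℤ_[p] W] (hca : Continuous (algebraMap ℤ_[p] W))
    (μ : C(ℤ_[p], W) →L[W] W)
    -- μ is supported on ℤ_p^× :
    (hsupp : ∀ (φ Ψ : C(ℤ_[p], W)),
      (∀ x : ℤ_[p], Ψ x = if PadicInt.toZMod x = 0 then φ x else 0) → μ Ψ = 0)
    (n : ℕ) (φ : ZMod (p ^ n) → W)  -- the locally constant function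
    -- ν = φ·μ is the twisted measure :
    (ν : C(ℤ_[p], W) →L[W] W)
    (hν : ∀ (ψ Φψ : C(ℤ_[p], W)),
      (∀ x : ℤ_[p], Φψ x = φ (PadicInt.toZModPow n x) * ψ x) → ν ψ = μ Φψ)
    -- G = [φ]Φ_μ is the Amice transform of φ·μ :
    (G : PowerSeries W)
    (hG : ∀ k : ℕ, PowerSeries.coeff k G = ν (binomMap p W hca k))
    (m : ℤ)
    -- Ψ is the function x ↦ φ(x mod p^n)·x^m :
    (Ψ : C(ℤ_[p], W))
    (hΨ : ∀ x : ℤ_[p],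
      Ψ x = φ (PadicInt.toZModPow n x) * algebraMap ℤ_[p] W (padicZPow p x m)) :
    (0 ≤ m → PowerSeries.constantCoeff ((theta W)^[m.toNat] G) = μ Ψ) ∧
      (m < 0 → Tendsto (fun i : ℕ =>
          PowerSeries.constantCoeff
            ((theta W)^[(m + ((p : ℤ) - 1) * (p : ℤ) ^ i).toNat] G))
        atTop (nhds (μ Ψ))) := by
  have hp : p.Prime := Fact.out
  set A : C(ℤ_[p], W) := (⟨algebraMap ℤ_[p] W, hca⟩ : C(ℤ_[p], W)) with hA
  -- the locally constant function φ∘toZModPow as a continuous map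
  have hφc : Continuous fun x : ℤ_[p] => φ (toZModPow n x) :=
    Continuous.comp continuous_of_discreteTopology (aux_continuous_toZModPow p n)
  set Φb : C(ℤ_[p], W) := ⟨fun x => φ (toZModPow n x), hφc⟩ with hΦb
  -- constant coefficient of θ^[k] G
  have hcc : ∀ k : ℕ, PowerSeries.constantCoeff ((theta W)^[k] G) = ν (A ^ k) := by
    intro k
    have := aux_amice_iter p W hca ν G hG k 0
    rw [← coeff_zero_eq_constantCoeff_apply, this]
    congr 1
    have : binomMap p W hca 0 = 1 := by
      ext x
      simp [binomMap]
    rw [this, mul_one]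
  -- ν (A^k) = μ (Φb * A^k)
  have hνμ : ∀ k : ℕ, ν (A ^ k) = μ (Φb * A ^ k) := by
    intro k
    refine hν (A ^ k) (Φb * A ^ k) fun x => ?_
    simp [ContinuousMap.mul_apply, hΦb]
  constructor
  · -- positive case
    intro hm
    rw [hcc m.toNat, hνμ m.toNat]
    congr 1
    ext x
    rw [hΨ x, ContinuousMap.mul_apply]
    congr 1
    simp only [hA, ContinuousMap.pow_apply, ContinuousMap.coe_mk, ← map_pow]
    rw [padicZPow, if_pos hm]
  · -- negative case
    intro hm
    set r : ℕ := (-m).toNat with hr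
    have hrm : (r : ℤ) = -m := Int.toNat_of_nonneg (by omega)
    -- the functions h i
    have key : ∀ i : ℕ, PowerSeries.constantCoeff
        ((theta W)^[(m + ((p : ℤ) - 1) * (p : ℤ) ^ i).toNat] G)
        = μ (Φb * A ^ (m + ((p : ℤ) - 1) * (p : ℤ) ^ i).toNat) := by
      intro i; rw [hcc, hνμ]
    -- bounds
    obtain ⟨Cφ', hCφ'⟩ := Finite.exists_le fun a : ZMod (p ^ n) => ‖φ a‖
    set Cφ : ℝ := max Cφ' 0 with hCφdef
    have hCφ : ∀ a, ‖φ a‖ ≤ Cφ := fun a => le_trans (hCφ' a) (le_max_left _ _)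
    have hCφ0 : 0 ≤ Cφ := le_max_right _ _
    obtain ⟨z₀, -, hC⟩ := isCompact_univ.exists_isMaxOn Set.univ_nonempty
      (hca.norm.continuousOn (s := (Set.univ : Set ℤ_[p])))
    set C : ℝ := ‖algebraMap ℤ_[p] W z₀‖ with hCdef
    have hC' : ∀ z : ℤ_[p], ‖algebraMap ℤ_[p] W z‖ ≤ C := fun z => hC (Set.mem_univ z)
    have hC0 : 0 ≤ C := norm_nonneg _
    -- indicator of non-units
    have hχc : Continuous fun x : ℤ_[p] => (if toZMod x = 0 then (1:W) else 0) :=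
      (continuous_of_discreteTopology
        (f := fun a : ZMod p => if a = 0 then (1:W) else 0)).comp (aux_continuous_toZMod p)
    set χ : C(ℤ_[p], W) := ⟨_, hχc⟩ with hχ
    -- the deviation functions
    have main : ∀ i : ℕ,
        μ (Φb * A ^ (m + ((p : ℤ) - 1) * (p : ℤ) ^ i).toNat) =
          μ ((Φb * A ^ (m + ((p : ℤ) - 1) * (p : ℤ) ^ i).toNat - Ψ)
            - χ * (Φb * A ^ (m + ((p : ℤ) - 1) * (p : ℤ) ^ i).toNat - Ψ)) + μ Ψ := by
      intro i
      set D : C(ℤ_[p], W) := Φb * A ^ (m + ((p : ℤ) - 1) * (p : ℤ) ^ i).toNat - Ψ with hD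
      have hE : μ (χ * D) = 0 := by
        refine hsupp D (χ * D) fun x => ?_
        simp only [ContinuousMap.mul_apply, hχ, ContinuousMap.coe_mk]
        split <;> simp
      rw [map_sub, hE, sub_zero, map_sub]
      ring
    -- eventual norm bound on the deviation
    have hbound : ∀ i : ℕ, (r : ℤ) ≤ ((p:ℤ) - 1) * (p:ℤ)^i →
        ‖(Φb * A ^ (m + ((p : ℤ) - 1) * (p : ℤ) ^ i).toNat - Ψ)
            - χ * (Φb * A ^ (m + ((p : ℤ) - 1) * (p : ℤ) ^ i).toNat - Ψ)‖
          ≤ Cφ * (‖algebraMap ℤ_[p] W ((p:ℤ_[p])^(i+1))‖ * C) := by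
      intro i hi
      set k : ℕ := (m + ((p : ℤ) - 1) * (p : ℤ) ^ i).toNat with hk
      set e : ℕ := (p - 1) * p ^ i with he
      have hecast : (e : ℤ) = ((p:ℤ) - 1) * (p:ℤ)^i := by
        rw [he]; push_cast [Nat.cast_sub hp.one_le]; ring
      have hke : k + r = e := by
        have hk' : (k : ℤ) = m + ((p:ℤ) - 1) * (p:ℤ)^i :=
          Int.toNat_of_nonneg (by omega)
        omega
      set D : C(ℤ_[p], W) := Φb * A ^ k - Ψ with hD
      refine ContinuousMap.norm_le _ (by positivity) |>.mpr fun x => ?_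
      simp only [ContinuousMap.sub_apply, ContinuousMap.mul_apply, hχ, ContinuousMap.coe_mk]
      by_cases hx0 : toZMod x = 0
      · rw [if_pos hx0, one_mul, sub_self, norm_zero]
        positivity
      · rw [if_neg hx0, zero_mul, sub_zero]
        have hxu : IsUnit x := aux_isUnit_of_toZMod_ne_zero p x hx0
        obtain ⟨u, hu⟩ := aux_fermat p x hxu i
        rw [hD, ContinuousMap.sub_apply, ContinuousMap.mul_apply, hΨ x]
        simp only [hΦb, ContinuousMap.coe_mk]
        rw [← mul_sub]
        have hAk : (A ^ k) x = algebraMap ℤ_[p] W (x ^ k) := by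
          simp [hA, ContinuousMap.pow_apply, map_pow]
        rw [hAk, padicZPow, if_neg (by omega), ← hr, ← map_sub]
        have hdiff : x ^ k - Ring.inverse x ^ r
            = (p:ℤ_[p])^(i+1) * (Ring.inverse x ^ r * u) := by
          have hinv : Ring.inverse x * x = 1 := Ring.inverse_mul_cancel x hxu
          have hxe : Ring.inverse x ^ r * x ^ e = x ^ k := by
            rw [← hke, pow_add, mul_comm (x ^ k), ← mul_assoc, ← mul_pow, hinv, one_pow, one_mul]
          calc x ^ k - Ring.inverse x ^ r
              = Ring.inverse x ^ r * (x ^ e - 1) := by rw [mul_sub, mul_one, hxe]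
            _ = (p:ℤ_[p])^(i+1) * (Ring.inverse x ^ r * u) := by rw [hu]; ring
        rw [hdiff, map_mul]
        calc ‖(φ (toZModPow n x)) * (algebraMap ℤ_[p] W ((p:ℤ_[p])^(i+1))
                * algebraMap ℤ_[p] W (Ring.inverse x ^ r * u))‖
            ≤ ‖φ (toZModPow n x)‖ * ‖algebraMap ℤ_[p] W ((p:ℤ_[p])^(i+1))
                * algebraMap ℤ_[p] W (Ring.inverse x ^ r * u)‖ := norm_mul_le _ _
          _ ≤ ‖φ (toZModPow n x)‖ * (‖algebraMap ℤ_[p] W ((p:ℤ_[p])^(i+1))‖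
                * ‖algebraMap ℤ_[p] W (Ring.inverse x ^ r * u)‖) :=
              mul_le_mul_of_nonneg_left (norm_mul_le _ _) (norm_nonneg _)
          _ ≤ Cφ * (‖algebraMap ℤ_[p] W ((p:ℤ_[p])^(i+1))‖ * C) := by
              gcongr
              · exact hCφ _
              · exact hC' _
    -- the bound tends to zero
    have htend0 : Tendsto (fun i : ℕ => Cφ * (‖algebraMap ℤ_[p] W ((p:ℤ_[p])^(i+1))‖ * C))
        atTop (nhds 0) := by
      have h1 : Tendsto (fun i : ℕ => ((p:ℤ_[p])^(i+1))) atTop (nhds 0) := by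
        have hnorm : ‖(p:ℤ_[p])‖ < 1 := by
          rw [PadicInt.norm_p, inv_lt_one_iff₀]
          right
          exact_mod_cast hp.one_lt
        exact (tendsto_pow_atTop_nhds_zero_of_norm_lt_one hnorm).comp (tendsto_add_atTop_nat 1)
      have h2 : Tendsto (fun i : ℕ => ‖algebraMap ℤ_[p] W ((p:ℤ_[p])^(i+1))‖) atTop (nhds 0) := by
        have := (hca.tendsto 0).comp h1
        rw [map_zero] at this
        simpa using this.norm
      have : Tendsto (fun i : ℕ => Cφ * (‖algebraMap ℤ_[p] W ((p:ℤ_[p])^(i+1))‖ * C))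
          atTop (nhds (Cφ * (0 * C))) := (h2.mul_const C).const_mul Cφ
      simpa using this
    -- eventual bound
    have hev : ∀ᶠ i : ℕ in atTop, (r : ℤ) ≤ ((p:ℤ) - 1) * (p:ℤ)^i := by
      filter_upwards [eventually_ge_atTop r] with i hi
      have h1 : (i : ℤ) < (p:ℤ)^i := by
        exact_mod_cast Nat.lt_pow_self (n := i) hp.one_lt
      have h2 : (1:ℤ) ≤ (p:ℤ) - 1 := by
        have := hp.two_le; omega
      nlinarith [pow_pos (show (0:ℤ) < p from by exact_mod_cast hp.pos) i]
    -- the deviation tends to zero in C(ℤ_[p], W)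
    have hFtend : Tendsto (fun i : ℕ =>
        (Φb * A ^ (m + ((p : ℤ) - 1) * (p : ℤ) ^ i).toNat - Ψ)
          - χ * (Φb * A ^ (m + ((p : ℤ) - 1) * (p : ℤ) ^ i).toNat - Ψ))
        atTop (nhds 0) := by
      refine squeeze_zero_norm' ?_ htend0
      filter_upwards [hev] with i hi
      exact hbound i hi
    have hμF : Tendsto (fun i : ℕ => μ
        ((Φb * A ^ (m + ((p : ℤ) - 1) * (p : ℤ) ^ i).toNat - Ψ)
          - χ * (Φb * A ^ (m + ((p : ℤ) - 1) * (p : ℤ) ^ i).toNat - Ψ)))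
        atTop (nhds 0) := by
      have := (μ.continuous.tendsto 0).comp hFtend
      rwa [map_zero] at this
    -- conclude
    have hfin := hμF.add_const (μ Ψ)
    rw [zero_add] at hfin
    refine Tendsto.congr (fun i => ?_) hfin
    rw [key i, main i]
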